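/- Let δ > 0 and let A, B, K₂, K₁, K₀ : I → ℝ be differentiable functions on a real interval I satisfying K₂' + 4AK₂ - 2δ²K₂² = 0, K₁' + 2AK₁ - 2δ²K₁K₂ + 2BK₂ = 0, and K₀' + 2A + BK₁ - (δ²/2)(K₁² + 2K₂) = 0 on I. Define Φ(t, x) = A(t)x² + B(t)x + C(t) (for any differentiable C) and m(t, x) = exp(K₂(t)x² + K₁(t)x + K₀(t)). Then for every t ∈ I and x ∈ ℝ, ∂_t m + ∂_x(m · ∂_x Φ) = (δ²/2)∂²_{xx} m. -/

import Mathlib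

/-- If `K₂, K₁, K₀` are differentiable on a real interval `I` and satisfy
`K₂' + 4AK₂ - 2δ²K₂² = 0`, `K₁' + 2AK₁ - 2δ²K₁K₂ + 2BK₂ = 0`,
`K₀' + 2A + BK₁ - (δ²/2)(K₁² + 2K₂) = 0` on `I`, then with
`Φ(t,x) = A(t)x² + B(t)x + C(t)` (for any differentiable `C`) and
`m(t,x) = exp(K₂(t)x² + K₁(t)x + K₀(t))`, the Kolmogorov–Fokker–Planck equation
`∂ₜm + ∂ₓ(m ∂ₓΦ) = (δ²/2)∂²ₓₓm` holds for all `t ∈ I`, `x ∈ ℝ`. -/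
theorem gaussian_ansatz_solves_KFP
    (δ : ℝ) (hδ : 0 < δ) (I : Set ℝ) (hI : I.OrdConnected)
    (A B C K₂ K₁ K₀ : ℝ → ℝ)
    (hAdiff : ∀ t ∈ I, DifferentiableAt ℝ A t)
    (hBdiff : ∀ t ∈ I, DifferentiableAt ℝ B t)
    (hCdiff : ∀ t ∈ I, DifferentiableAt ℝ C t)
    (hK₂ : ∀ t ∈ I,
      HasDerivAt K₂ (2 * δ ^ 2 * (K₂ t) ^ 2 - 4 * A t * K₂ t) t)
    (hK₁ : ∀ t ∈ I,
      HasDerivAt K₁ (2 * δ ^ 2 * K₁ t * K₂ t - 2 * A t * K₁ t - 2 * B t * K₂ t) t)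
    (hK₀ : ∀ t ∈ I,
      HasDerivAt K₀ ((δ ^ 2 / 2) * ((K₁ t) ^ 2 + 2 * K₂ t) - 2 * A t - B t * K₁ t) t) :
    ∀ t ∈ I, ∀ x : ℝ,
      deriv (fun s => Real.exp (K₂ s * x ^ 2 + K₁ s * x + K₀ s)) t
        + deriv (fun y => Real.exp (K₂ t * y ^ 2 + K₁ t * y + K₀ t)
            * deriv (fun z => A t * z ^ 2 + B t * z + C t) y) x
      = (δ ^ 2 / 2) *
          deriv (deriv (fun y => Real.exp (K₂ t * y ^ 2 + K₁ t * y + K₀ t))) x := by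
  intro t ht x
  have hE : ∀ y : ℝ, HasDerivAt (fun y : ℝ => K₂ t * y ^ 2 + K₁ t * y + K₀ t)
      (K₂ t * (2 * y) + K₁ t) y := by
    intro y
    have h1 : HasDerivAt (fun y : ℝ => K₂ t * y ^ 2) (K₂ t * (2 * y)) y := by
      simpa using ((hasDerivAt_pow 2 y).const_mul (K₂ t))
    have h2 : HasDerivAt (fun y : ℝ => K₁ t * y) (K₁ t) y := by
      simpa using (hasDerivAt_id y).const_mul (K₁ t)
    simpa using (h1.add h2).add_const (K₀ t)
  have hm : ∀ y : ℝ, HasDerivAt (fun y : ℝ => Real.exp (K₂ t * y ^ 2 + K₁ t * y + K₀ t))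
      (Real.exp (K₂ t * y ^ 2 + K₁ t * y + K₀ t) * (K₂ t * (2 * y) + K₁ t)) y :=
    fun y => (hE y).exp
  have hderivm : deriv (fun y : ℝ => Real.exp (K₂ t * y ^ 2 + K₁ t * y + K₀ t))
      = fun y => Real.exp (K₂ t * y ^ 2 + K₁ t * y + K₀ t) * (K₂ t * (2 * y) + K₁ t) := by
    funext y; exact (hm y).deriv
  have hΦ : (deriv (fun z : ℝ => A t * z ^ 2 + B t * z + C t))
      = fun y => A t * (2 * y) + B t := by
    funext y
    have h1 : HasDerivAt (fun z : ℝ => A t * z ^ 2) (A t * (2 * y)) y := by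
      simpa using ((hasDerivAt_pow 2 y).const_mul (A t))
    have h2 : HasDerivAt (fun z : ℝ => B t * z) (B t) y := by
      simpa using (hasDerivAt_id y).const_mul (B t)
    exact (((h1.add h2).add_const (C t)).deriv)
  -- time derivative
  have htime : deriv (fun s => Real.exp (K₂ s * x ^ 2 + K₁ s * x + K₀ s)) t
      = Real.exp (K₂ t * x ^ 2 + K₁ t * x + K₀ t) *
        ((2 * δ ^ 2 * (K₂ t) ^ 2 - 4 * A t * K₂ t) * x ^ 2
          + (2 * δ ^ 2 * K₁ t * K₂ t - 2 * A t * K₁ t - 2 * B t * K₂ t) * x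
          + ((δ ^ 2 / 2) * ((K₁ t) ^ 2 + 2 * K₂ t) - 2 * A t - B t * K₁ t)) := by
    have h := ((((hK₂ t ht).mul_const (x ^ 2)).add
      ((hK₁ t ht).mul_const x)).add (hK₀ t ht)).exp
    exact h.deriv
  -- transport term
  have hlinA : HasDerivAt (fun y : ℝ => A t * (2 * y) + B t) (A t * 2) x := by
    have : HasDerivAt (fun y : ℝ => 2 * y) (2 : ℝ) x := by
      simpa using (hasDerivAt_id x).const_mul (2:ℝ)
    simpa using (this.const_mul (A t)).add_const (B t)
  have htrans : deriv (fun y : ℝ => Real.exp (K₂ t * y ^ 2 + K₁ t * y + K₀ t)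
      * deriv (fun z : ℝ => A t * z ^ 2 + B t * z + C t) y) x
      = Real.exp (K₂ t * x ^ 2 + K₁ t * x + K₀ t) * (K₂ t * (2 * x) + K₁ t)
          * (A t * (2 * x) + B t)
        + Real.exp (K₂ t * x ^ 2 + K₁ t * x + K₀ t) * (A t * 2) := by
    simp only [hΦ]
    exact ((hm x).mul hlinA).deriv
  -- second spatial derivative
  have hlinK : HasDerivAt (fun y : ℝ => K₂ t * (2 * y) + K₁ t) (K₂ t * 2) x := by
    have : HasDerivAt (fun y : ℝ => 2 * y) (2 : ℝ) x := by
      simpa using (hasDerivAt_id x).const_mul (2:ℝ)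
    simpa using (this.const_mul (K₂ t)).add_const (K₁ t)
  have hsecond : deriv (deriv (fun y : ℝ => Real.exp (K₂ t * y ^ 2 + K₁ t * y + K₀ t))) x
      = Real.exp (K₂ t * x ^ 2 + K₁ t * x + K₀ t) * (K₂ t * (2 * x) + K₁ t)
          * (K₂ t * (2 * x) + K₁ t)
        + Real.exp (K₂ t * x ^ 2 + K₁ t * x + K₀ t) * (K₂ t * 2) := by
    rw [hderivm]
    exact ((hm x).mul hlinK).deriv
  rw [htime, htrans, hsecond]
  ring
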